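/- For i = 1, 2, let Dᵢ ⊆ ℝⁿ be a vector subspace, μᵢ ∈ Dᵢ^⊥, and Lᵢ ∈ ℝ^{n×n} with column space contained in Dᵢ^⊥. Define fᵢ : ℝⁿ → [0,∞] by fᵢ(x) = inf { (1/2)‖z‖² : z ∈ ℝⁿ, x − μᵢ − Lᵢ·z ∈ Dᵢ } (infimum in [0,∞], inf ∅ = +∞). If f₁(x) = f₂(x) for all x ∈ ℝⁿ, then D₁ = D₂, μ₁ = μ₂, and L₁·L₁ᵀ = L₂·L₂ᵀ. -/

import Mathlib

open Matrix
open scoped ENNReal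

lemma gauss_zero_iff {n : ℕ} (D : Submodule ℝ (Fin n → ℝ)) (μ : Fin n → ℝ)
    (L : Matrix (Fin n) (Fin n) ℝ)
    (hL : ∀ z : Fin n → ℝ, ∀ d ∈ D, L.mulVec z ⬝ᵥ d = 0) (x : Fin n → ℝ) :
    sInf {t : ℝ≥0∞ | ∃ z : Fin n → ℝ, x - μ - L.mulVec z ∈ D ∧
        t = ENNReal.ofReal (2⁻¹ * ∑ i, z i ^ 2)} = 0 ↔ x - μ ∈ D := by
  constructor
  · intro h
    have h1 : sInf {t : ℝ≥0∞ | ∃ z : Fin n → ℝ, x - μ - L.mulVec z ∈ D ∧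
        t = ENNReal.ofReal (2⁻¹ * ∑ i, z i ^ 2)} < 1 := by rw [h]; exact zero_lt_one
    obtain ⟨t₁, ⟨z₁, hz₁, -⟩, -⟩ := sInf_lt_iff.mp h1
    set q := L.mulVec z₁ with hqdef
    set w := q ᵥ* L with hwdef
    have key : ∀ ε : ℝ, 0 < ε → (q ⬝ᵥ q) ^ 2 ≤ (∑ i, w i ^ 2) * (2 * ε) := by
      intro ε hε
      have h2 : sInf {t : ℝ≥0∞ | ∃ z : Fin n → ℝ, x - μ - L.mulVec z ∈ D ∧
          t = ENNReal.ofReal (2⁻¹ * ∑ i, z i ^ 2)} < ENNReal.ofReal ε := by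
        rw [h]; exact ENNReal.ofReal_pos.mpr hε
      obtain ⟨t₂, ⟨z, hz, rfl⟩, hlt⟩ := sInf_lt_iff.mp h2
      have hzsmall : 2⁻¹ * ∑ i, z i ^ 2 < ε :=
        (ENNReal.ofReal_lt_ofReal_iff hε).mp hlt
      have hd : L.mulVec z - q ∈ D := by
        have := D.sub_mem hz₁ hz
        simpa [hqdef, sub_sub_sub_cancel_left] using this
      have hq0 : q ⬝ᵥ (L.mulVec z - q) = 0 := hL z₁ _ hd
      have hqz : q ⬝ᵥ L.mulVec z = q ⬝ᵥ q := by
        rw [dotProduct_sub] at hq0; linarith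
      have hqq : q ⬝ᵥ q = ∑ i, w i * z i := by
        rw [← hqz, dotProduct_mulVec]; rfl
      have hcs : (∑ i, w i * z i) ^ 2 ≤ (∑ i, w i ^ 2) * (∑ i, z i ^ 2) :=
        Finset.sum_mul_sq_le_sq_mul_sq _ _ _
      have hwnn : (0:ℝ) ≤ ∑ i, w i ^ 2 := Finset.sum_nonneg fun i _ => sq_nonneg _
      have hz2 : ∑ i, z i ^ 2 < 2 * ε := by linarith
      calc (q ⬝ᵥ q) ^ 2 = (∑ i, w i * z i) ^ 2 := by rw [hqq]
        _ ≤ (∑ i, w i ^ 2) * (∑ i, z i ^ 2) := hcs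
        _ ≤ (∑ i, w i ^ 2) * (2 * ε) := by
            exact mul_le_mul_of_nonneg_left (le_of_lt hz2) hwnn
    have hqq0 : q ⬝ᵥ q = 0 := by
      have hnn : (0:ℝ) ≤ q ⬝ᵥ q := by
        simpa [dotProduct, ← sq] using
          (Finset.sum_nonneg fun i (_ : i ∈ Finset.univ) => sq_nonneg (q i))
      by_contra hne
      have hpos : 0 < q ⬝ᵥ q := lt_of_le_of_ne hnn (Ne.symm hne)
      set K := ∑ i, w i ^ 2 with hK
      have hKnn : (0:ℝ) ≤ K := Finset.sum_nonneg fun i _ => sq_nonneg _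
      have hεpos : 0 < (q ⬝ᵥ q) ^ 2 / (4 * (K + 1)) := by positivity
      have hkey := key _ hεpos
      have hden : (0:ℝ) < 2 * (K + 1) := by linarith
      have h5 : K * (2 * ((q ⬝ᵥ q) ^ 2 / (4 * (K + 1)))) =
          (K * (q ⬝ᵥ q) ^ 2) / (2 * (K + 1)) := by
        field_simp
        ring
      have h6 : (K * (q ⬝ᵥ q) ^ 2) / (2 * (K + 1)) < (q ⬝ᵥ q) ^ 2 := by
        rw [div_lt_iff₀ hden]
        nlinarith [mul_pos hpos hpos]
      rw [h5] at hkey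
      linarith
    have hq0 : q = 0 := dotProduct_self_eq_zero.mp hqq0
    rw [hq0, sub_zero] at hz₁
    exact hz₁
  · intro hx
    refine le_antisymm ?_ zero_le
    refine sInf_le ?_
    exact ⟨0, by simpa using hx, by simp⟩

lemma gauss_transfer {n : ℕ} (D : Submodule ℝ (Fin n → ℝ)) (μ : Fin n → ℝ)
    (L₁ L₂ : Matrix (Fin n) (Fin n) ℝ)
    (hL₁ : ∀ z : Fin n → ℝ, ∀ d ∈ D, L₁.mulVec z ⬝ᵥ d = 0)
    (hL₂ : ∀ z : Fin n → ℝ, ∀ d ∈ D, L₂.mulVec z ⬝ᵥ d = 0)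
    (hle : ∀ x : Fin n → ℝ,
      sInf {t : ℝ≥0∞ | ∃ z : Fin n → ℝ, x - μ - L₁.mulVec z ∈ D ∧
          t = ENNReal.ofReal (2⁻¹ * ∑ i, z i ^ 2)} ≤
        sInf {t : ℝ≥0∞ | ∃ z : Fin n → ℝ, x - μ - L₂.mulVec z ∈ D ∧
          t = ENNReal.ofReal (2⁻¹ * ∑ i, z i ^ 2)}) :
    ∀ y : Fin n → ℝ, (∑ i, (y ᵥ* L₂) i ^ 2) ≤ ∑ i, (y ᵥ* L₁) i ^ 2 := by
  intro y
  set u₂ := y ᵥ* L₂ with hu₂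
  set u₁ := y ᵥ* L₁ with hu₁
  set s := ∑ i, u₂ i ^ 2 with hs
  set t := ∑ i, u₁ i ^ 2 with ht
  have hsnn : (0:ℝ) ≤ s := Finset.sum_nonneg fun i _ => sq_nonneg _
  have htnn : (0:ℝ) ≤ t := Finset.sum_nonneg fun i _ => sq_nonneg _
  set x := μ + L₂.mulVec u₂ with hx
  have key : ∀ ε : ℝ, 0 < ε → s ^ 2 ≤ t * (s + 2 * ε) := by
    intro ε hε
    have h2 : sInf {t : ℝ≥0∞ | ∃ z : Fin n → ℝ, x - μ - L₂.mulVec z ∈ D ∧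
        t = ENNReal.ofReal (2⁻¹ * ∑ i, z i ^ 2)} ≤ ENNReal.ofReal (2⁻¹ * s) := by
      refine sInf_le ⟨u₂, ?_, rfl⟩
      simp [hx]
    have h1 : sInf {t : ℝ≥0∞ | ∃ z : Fin n → ℝ, x - μ - L₁.mulVec z ∈ D ∧
        t = ENNReal.ofReal (2⁻¹ * ∑ i, z i ^ 2)} < ENNReal.ofReal (2⁻¹ * s + ε) := by
      refine lt_of_le_of_lt ((hle x).trans h2) ?_
      refine (ENNReal.ofReal_lt_ofReal_iff (by positivity)).mpr (by linarith)
    obtain ⟨t₂, ⟨z, hz, rfl⟩, hlt⟩ := sInf_lt_iff.mp h1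
    have hzval : 2⁻¹ * ∑ i, z i ^ 2 < 2⁻¹ * s + ε :=
      (ENNReal.ofReal_lt_ofReal_iff (by positivity)).mp hlt
    -- feasibility forces L₁ z = L₂ u₂
    have hd : L₂.mulVec u₂ - L₁.mulVec z ∈ D := by
      have : x - μ - L₁.mulVec z ∈ D := hz
      simpa [hx, add_sub_cancel_left] using this
    have hdd : (L₂.mulVec u₂ - L₁.mulVec z) ⬝ᵥ (L₂.mulVec u₂ - L₁.mulVec z) = 0 := by
      rw [sub_dotProduct]
      rw [hL₂ u₂ _ hd, hL₁ z _ hd]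
      ring
    have heq : L₁.mulVec z = L₂.mulVec u₂ := by
      have := dotProduct_self_eq_zero.mp hdd
      have := sub_eq_zero.mp this
      exact this.symm
    have hs1 : s = ∑ i, u₁ i * z i := by
      have e1 : y ⬝ᵥ L₂.mulVec u₂ = u₂ ⬝ᵥ u₂ := by
        rw [dotProduct_mulVec]
      have e2 : y ⬝ᵥ L₁.mulVec z = u₁ ⬝ᵥ z := by
        rw [dotProduct_mulVec]
      have e3 : u₂ ⬝ᵥ u₂ = s := by simp [hs, dotProduct, sq]
      rw [← e3, ← e1, ← heq, e2]; rfl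
    have hcs : (∑ i, u₁ i * z i) ^ 2 ≤ t * (∑ i, z i ^ 2) :=
      Finset.sum_mul_sq_le_sq_mul_sq _ _ _
    have hz2 : ∑ i, z i ^ 2 ≤ s + 2 * ε := by linarith
    calc s ^ 2 = (∑ i, u₁ i * z i) ^ 2 := by rw [hs1]
      _ ≤ t * (∑ i, z i ^ 2) := hcs
      _ ≤ t * (s + 2 * ε) := mul_le_mul_of_nonneg_left hz2 htnn
  have hss : s ^ 2 ≤ t * s := by
    by_contra hc
    push_neg at hc
    have hεpos : 0 < (s ^ 2 - t * s) / (2 * (t + 1)) := by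
      have : 0 < s ^ 2 - t * s := by linarith
      positivity
    have hkey := key _ hεpos
    have hδ : (0:ℝ) < s ^ 2 - t * s := by linarith
    have hden : (0:ℝ) < t + 1 := by linarith
    have h5 : t * (s + 2 * ((s ^ 2 - t * s) / (2 * (t + 1)))) =
        t * s + (t * (s ^ 2 - t * s)) / (t + 1) := by
      field_simp
    have h6 : (t * (s ^ 2 - t * s)) / (t + 1) < s ^ 2 - t * s := by
      rw [div_lt_iff₀ hden]
      nlinarith
    rw [h5] at hkey
    linarith
  rcases eq_or_lt_of_le hsnn with h0 | hpos
  · rw [← h0]; exact htnn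
  · nlinarith

lemma symm_quad_ext {n : ℕ} (A B : Matrix (Fin n) (Fin n) ℝ) (hA : Aᵀ = A) (hB : Bᵀ = B)
    (h : ∀ y : Fin n → ℝ, y ⬝ᵥ A.mulVec y = y ⬝ᵥ B.mulVec y) : A = B := by
  have hsym : ∀ (M : Matrix (Fin n) (Fin n) ℝ), Mᵀ = M →
      ∀ u v : Fin n → ℝ, v ⬝ᵥ M.mulVec u = u ⬝ᵥ M.mulVec v := by
    intro M hM u v
    rw [dotProduct_mulVec, ← mulVec_transpose, hM, dotProduct_comm]
  have hbil : ∀ u v : Fin n → ℝ, u ⬝ᵥ A.mulVec v = u ⬝ᵥ B.mulVec v := by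
    intro u v
    have h1 := h (u + v)
    have h2 := h u
    have h3 := h v
    simp only [add_dotProduct, dotProduct_add, mulVec_add] at h1
    have hA' := hsym A hA v u
    have hB' := hsym B hB v u
    linarith
  ext i j
  have := hbil (Pi.single i 1) (Pi.single j 1)
  simpa [mulVec_single, single_dotProduct] using this

theorem extended_gaussian_nf_unique {n : ℕ}
    (D₁ D₂ : Submodule ℝ (Fin n → ℝ)) (μ₁ μ₂ : Fin n → ℝ)
    (L₁ L₂ : Matrix (Fin n) (Fin n) ℝ)
    (hμ₁ : ∀ d ∈ D₁, μ₁ ⬝ᵥ d = 0) (hμ₂ : ∀ d ∈ D₂, μ₂ ⬝ᵥ d = 0)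
    (hL₁ : ∀ z : Fin n → ℝ, ∀ d ∈ D₁, L₁.mulVec z ⬝ᵥ d = 0)
    (hL₂ : ∀ z : Fin n → ℝ, ∀ d ∈ D₂, L₂.mulVec z ⬝ᵥ d = 0)
    (hf : ∀ x : Fin n → ℝ,
      sInf {t : ℝ≥0∞ | ∃ z : Fin n → ℝ, x - μ₁ - L₁.mulVec z ∈ D₁ ∧
          t = ENNReal.ofReal (2⁻¹ * ∑ i, z i ^ 2)} =
        sInf {t : ℝ≥0∞ | ∃ z : Fin n → ℝ, x - μ₂ - L₂.mulVec z ∈ D₂ ∧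
          t = ENNReal.ofReal (2⁻¹ * ∑ i, z i ^ 2)}) :
    D₁ = D₂ ∧ μ₁ = μ₂ ∧ L₁ * L₁ᵀ = L₂ * L₂ᵀ := by
  have h0 : ∀ x : Fin n → ℝ, (x - μ₁ ∈ D₁ ↔ x - μ₂ ∈ D₂) := by
    intro x
    rw [← gauss_zero_iff D₁ μ₁ L₁ hL₁ x, ← gauss_zero_iff D₂ μ₂ L₂ hL₂ x, hf x]
  have hμD : μ₁ - μ₂ ∈ D₂ := by
    have := (h0 μ₁).mp (by simp)
    simpa using this
  have hμD' : μ₂ - μ₁ ∈ D₁ := by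
    have := (h0 μ₂).mpr (by simp)
    simpa using this
  have hDsub : D₁ ≤ D₂ := by
    intro d hd
    have h2 : (μ₁ + d) - μ₂ ∈ D₂ := (h0 (μ₁ + d)).mp (by simpa using hd)
    have h3 : (μ₁ + d - μ₂) - (μ₁ - μ₂) ∈ D₂ := D₂.sub_mem h2 hμD
    have : (μ₁ + d - μ₂) - (μ₁ - μ₂) = d := by abel
    rwa [this] at h3
  have hDsub' : D₂ ≤ D₁ := by
    intro d hd
    have h2 : (μ₂ + d) - μ₁ ∈ D₁ := (h0 (μ₂ + d)).mpr (by simpa using hd)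
    have h3 : (μ₂ + d - μ₁) - (μ₂ - μ₁) ∈ D₁ := D₁.sub_mem h2 hμD'
    have : (μ₂ + d - μ₁) - (μ₂ - μ₁) = d := by abel
    rwa [this] at h3
  have hD : D₁ = D₂ := le_antisymm hDsub hDsub'
  have hμ : μ₁ = μ₂ := by
    have hv₁ : μ₁ - μ₂ ∈ D₁ := hD ▸ hμD
    have e1 : μ₁ ⬝ᵥ (μ₁ - μ₂) = 0 := hμ₁ _ hv₁
    have e2 : μ₂ ⬝ᵥ (μ₁ - μ₂) = 0 := hμ₂ _ hμD
    have e3 : (μ₁ - μ₂) ⬝ᵥ (μ₁ - μ₂) = 0 := by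
      rw [sub_dotProduct, e1, e2]; ring
    have := dotProduct_self_eq_zero.mp e3
    exact sub_eq_zero.mp this
  subst hD
  subst hμ
  refine ⟨rfl, rfl, ?_⟩
  have hle₁ := gauss_transfer D₁ μ₁ L₁ L₂ hL₁ hL₂ (fun x => le_of_eq (hf x))
  have hle₂ := gauss_transfer D₁ μ₁ L₂ L₁ hL₂ hL₁ (fun x => le_of_eq (hf x).symm)
  have hq : ∀ y : Fin n → ℝ, y ⬝ᵥ (L₁ * L₁ᵀ).mulVec y = y ⬝ᵥ (L₂ * L₂ᵀ).mulVec y := by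
    intro y
    have e : ∀ L : Matrix (Fin n) (Fin n) ℝ,
        y ⬝ᵥ (L * Lᵀ).mulVec y = ∑ i, (y ᵥ* L) i ^ 2 := by
      intro L
      rw [← mulVec_mulVec, dotProduct_mulVec, mulVec_transpose]
      simp [dotProduct, sq]
    rw [e L₁, e L₂]
    exact le_antisymm (hle₂ y) (hle₁ y)
  refine symm_quad_ext _ _ ?_ ?_ hq
  · rw [transpose_mul, transpose_transpose]
  · rw [transpose_mul, transpose_transpose]
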